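/- For a group G and a field k, the multiplication ⋆ on R(k,G) = k[X_g : g ∈ G] defined by α ⋆ β = Σ_u α(u) Π_{g∈G} (gβ)^{u(g)} (where gβ is the action of g on β by relabeling variables X_w ↦ X_{gw}) is associative and has identity element X_{1_G}; i.e., (R(k,G), ⋆) is a monoid. -/

import Mathlib

open MvPolynomial

/-- The multiplication `⋆` on `R(k,G) = k[X_g : g ∈ G]`:
`α ⋆ β = Σ_u α(u) Π_{g∈G} (gβ)^{u(g)}`, where `g` acts on polynomials by
relabeling the variables `X_w ↦ X_{g w}`. -/
noncomputable def RkGmul {k : Type} [Field k] {G : Type} [Group G]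
    (α β : MvPolynomial G k) : MvPolynomial G k :=
  MvPolynomial.aeval (fun g : G => MvPolynomial.rename (fun h : G => g * h) β) α

theorem RkG_star_monoid {k : Type} [Field k] {G : Type} [Group G] :
    (∀ α β γ : MvPolynomial G k, RkGmul (RkGmul α β) γ = RkGmul α (RkGmul β γ)) ∧
    (∀ α : MvPolynomial G k, RkGmul (MvPolynomial.X (1 : G)) α = α) ∧
    (∀ α : MvPolynomial G k, RkGmul α (MvPolynomial.X (1 : G)) = α) := by
  refine ⟨?_, ?_, ?_⟩
  · intro α β γ
    unfold RkGmul
    rw [← AlgHom.comp_apply, comp_aeval]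
    have key : ∀ g : G,
        (aeval fun g' : G => rename (fun h : G => g' * h) γ) ((rename fun h : G => g * h) β)
        = (rename fun h : G => g * h) ((aeval fun g' : G => rename (fun h : G => g' * h) γ) β) := by
      intro g
      rw [aeval_rename, ← AlgHom.comp_apply, comp_aeval]
      have : ((fun g' : G => rename (fun h : G => g' * h) γ) ∘ fun h : G => g * h)
          = fun i : G => (rename fun h : G => g * h) ((rename fun h : G => i * h) γ) := by
        funext h
        simp only [Function.comp_apply, rename_rename]
        have : (fun h1 : G => g * h * h1) = ((fun h1 : G => g * h1) ∘ fun h1 : G => h * h1) := by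
          funext w; simp [mul_assoc]
        rw [this]
      rw [this]
    simp only [key]
  · intro α
    simp only [RkGmul, aeval_X]
    rw [show (fun h : G => (1:G) * h) = id from funext one_mul, rename_id, AlgHom.id_apply]
  · intro α
    simp [RkGmul]
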